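/- Consider the Probabilistic Serial mechanism with any profile of reported strict orders, and let t_1 < 1/3 be a time such that every item of which agent 1 eats a positive amount and which is exhausted on or before time t_1 has, at its exhaustion moment, at least two agents other than agent 1 eating it. Then in the modified eating process in which agent 1 is removed entirely (it never eats, while all other agents follow the normal rules), every item that is exhausted on or before time t_1 in the original process is exhausted by time (3/2)·t_1. -/

import Mathlib

open MeasureTheory

/-- An execution of the Probabilistic Serial eating process with `n` agents and `m` items
(each of supply 1).  Agent `i` reports the strict preference order encoded by the injective
rank function `rk i` (`rk i j < rk i j'` means agent `i` ranks item `j` above item `j'`).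
`active i t` tells whether agent `i` participates (eats at rate 1) at time `t`; the normal
scenario is `active = fun _ _ => True`, pausing/removing agents is modelled by making them
inactive.  `eats i t = some j` means agent `i` is eating item `j` at time `t`, and `rem j t`
is the remaining supply of item `j` at time `t`: it equals `1` minus the total time agents
have spent eating `j` during `(0, t]`.  An active agent always eats its most preferred item
among those with positive remaining supply. -/
structure PSExec (n m : ℕ) (rk : Fin n → Fin m → ℕ) (active : Fin n → ℝ → Prop) where
  eats : Fin n → ℝ → Option (Fin m)
  rem : Fin m → ℝ → ℝ
  meas : ∀ i j, MeasurableSet {t : ℝ | eats i t = some j}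
  rem_def : ∀ j, ∀ t : ℝ, 0 ≤ t →
    rem j t = 1 - ∑ i : Fin n,
      (volume {s : ℝ | 0 < s ∧ s ≤ t ∧ eats i s = some j}).toReal
  eats_iff : ∀ i, ∀ t : ℝ, 0 ≤ t → active i t → ∀ j,
    (eats i t = some j ↔ 0 < rem j t ∧ ∀ j', 0 < rem j' t → rk i j ≤ rk i j')
  eats_none : ∀ i, ∀ t : ℝ, ¬ active i t → eats i t = none

namespace PSExec

variable {n m : ℕ} {rk : Fin n → Fin m → ℕ} {active : Fin n → ℝ → Prop}

/-- The total amount of item `j` eaten by agent `i` (the allocation `x i j`). -/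
noncomputable def alloc (E : PSExec n m rk active) (i : Fin n) (j : Fin m) : ℝ :=
  (volume {s : ℝ | 0 < s ∧ E.eats i s = some j}).toReal

/-- The expected utility of agent `i` with cardinal utilities `a`. -/
noncomputable def utility (E : PSExec n m rk active) (a : Fin m → ℝ) (i : Fin n) : ℝ :=
  ∑ j, a j * E.alloc i j

/-- Item `j` is exhausted exactly at time `τ`. -/
def exhaustedAt (E : PSExec n m rk active) (j : Fin m) (τ : ℝ) : Prop :=
  0 < τ ∧ E.rem j τ = 0 ∧ ∀ s : ℝ, 0 ≤ s → s < τ → 0 < E.rem j s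

/-- Agent `i` is eating item `j` at the moment `τ`, in the left-limit sense (this is the
sense used for "eating an item at the moment of its exhaustion"). -/
def eatsAt (E : PSExec n m rk active) (i : Fin n) (j : Fin m) (τ : ℝ) : Prop :=
  ∃ δ > 0, ∀ s : ℝ, τ - δ < s → s < τ → E.eats i s = some j

/-- `T` is the exact moment at which the last item of `Obar` is exhausted. -/
def exhaustTime (E : PSExec n m rk active) (Obar : Finset (Fin m)) (T : ℝ) : Prop :=
  (∀ j ∈ Obar, E.rem j T = 0) ∧ ∀ s : ℝ, 0 ≤ s → s < T → ∃ j ∈ Obar, 0 < E.rem j s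

end PSExec

/-- Dichotomous cardinal utilities with interest set `Obar`. -/
def dicho {m : ℕ} (Obar : Finset (Fin m)) : Fin m → ℝ :=
  fun j => if j ∈ Obar then 1 else 0

namespace PSExec

variable {n m : ℕ} {rk : Fin n → Fin m → ℕ} {active : Fin n → ℝ → Prop}

/-- The set of times in `(0,t]` at which agent `i` eats item `j`. -/
def cs (E : PSExec n m rk active) (i : Fin n) (j : Fin m) (t : ℝ) : Set ℝ :=
  {s : ℝ | 0 < s ∧ s ≤ t ∧ E.eats i s = some j}

lemma cs_subset_Ioc (E : PSExec n m rk active) (i : Fin n) (j : Fin m) (t : ℝ) :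
    E.cs i j t ⊆ Set.Ioc 0 t := fun s hs => ⟨hs.1, hs.2.1⟩

lemma cs_meas (E : PSExec n m rk active) (i : Fin n) (j : Fin m) (t : ℝ) :
    MeasurableSet (E.cs i j t) := by
  have h : E.cs i j t = Set.Ioc 0 t ∩ {s | E.eats i s = some j} := by
    ext s; simp only [cs, Set.mem_setOf_eq, Set.mem_inter_iff, Set.mem_Ioc]; tauto
  rw [h]; exact measurableSet_Ioc.inter (E.meas i j)

lemma cs_vol_le (E : PSExec n m rk active) (i : Fin n) (j : Fin m) (t : ℝ) :
    volume (E.cs i j t) ≤ ENNReal.ofReal t := by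
  calc volume (E.cs i j t) ≤ volume (Set.Ioc 0 t) := measure_mono (E.cs_subset_Ioc i j t)
    _ = ENNReal.ofReal (t - 0) := Real.volume_Ioc
    _ = ENNReal.ofReal t := by rw [sub_zero]

lemma cs_vol_ne_top (E : PSExec n m rk active) (i : Fin n) (j : Fin m) (t : ℝ) :
    volume (E.cs i j t) ≠ ⊤ :=
  (lt_of_le_of_lt (E.cs_vol_le i j t) ENNReal.ofReal_lt_top).ne

lemma rem_eq (E : PSExec n m rk active) (j : Fin m) (t : ℝ) (ht : 0 ≤ t) :
    E.rem j t = 1 - ∑ i, (volume (E.cs i j t)).toReal := E.rem_def j t ht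

lemma rem_zero (E : PSExec n m rk active) (j : Fin m) : E.rem j 0 = 1 := by
  rw [E.rem_eq j 0 le_rfl]
  have h : ∀ i : Fin n, E.cs i j 0 = ∅ := by
    intro i; ext s; simp only [cs, Set.mem_setOf_eq, Set.mem_empty_iff_false, iff_false]
    rintro ⟨h1, h2, -⟩; linarith
  simp [h]

lemma cs_mono (E : PSExec n m rk active) (i : Fin n) (j : Fin m) {s t : ℝ} (hst : s ≤ t) :
    E.cs i j s ⊆ E.cs i j t := fun u hu => ⟨hu.1, hu.2.1.trans hst, hu.2.2⟩

lemma rem_anti (E : PSExec n m rk active) (j : Fin m) {s t : ℝ} (hs : 0 ≤ s) (hst : s ≤ t) :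
    E.rem j t ≤ E.rem j s := by
  rw [E.rem_eq j s hs, E.rem_eq j t (hs.trans hst)]
  have h : ∑ i, (volume (E.cs i j s)).toReal ≤ ∑ i, (volume (E.cs i j t)).toReal := by
    apply Finset.sum_le_sum
    intro i _
    exact ENNReal.toReal_mono (E.cs_vol_ne_top i j t) (measure_mono (E.cs_mono i j hst))
  linarith

lemma rem_sub_le (E : PSExec n m rk active) (j : Fin m) {s t : ℝ} (hs : 0 ≤ s) (hst : s ≤ t) :
    E.rem j s - E.rem j t ≤ n * (t - s) := by
  rw [E.rem_eq j s hs, E.rem_eq j t (hs.trans hst)]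
  have h : ∀ i : Fin n, (volume (E.cs i j t)).toReal ≤ (volume (E.cs i j s)).toReal + (t - s) := by
    intro i
    have hsub : E.cs i j t ⊆ E.cs i j s ∪ Set.Ioc s t := by
      rintro u ⟨h1, h2, h3⟩
      by_cases hu : u ≤ s
      · exact Or.inl ⟨h1, hu, h3⟩
      · exact Or.inr ⟨not_le.mp hu, h2⟩
    calc (volume (E.cs i j t)).toReal
        ≤ (volume (E.cs i j s ∪ Set.Ioc s t)).toReal := by
          apply ENNReal.toReal_mono _ (measure_mono hsub)
          apply ne_of_lt
          calc volume (E.cs i j s ∪ Set.Ioc s t)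
              ≤ volume (E.cs i j s) + volume (Set.Ioc s t) := measure_union_le _ _
            _ < ⊤ := by
                rw [Real.volume_Ioc]
                exact ENNReal.add_lt_top.mpr ⟨(E.cs_vol_ne_top i j s).lt_top, ENNReal.ofReal_lt_top⟩
      _ ≤ (volume (E.cs i j s)).toReal + (volume (Set.Ioc s t)).toReal := by
          calc (volume (E.cs i j s ∪ Set.Ioc s t)).toReal
              ≤ (volume (E.cs i j s) + volume (Set.Ioc s t)).toReal := by
                apply ENNReal.toReal_mono _ (measure_union_le _ _)
                rw [Real.volume_Ioc]
                exact (ENNReal.add_lt_top.mpr ⟨(E.cs_vol_ne_top i j s).lt_top, ENNReal.ofReal_lt_top⟩).ne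
            _ = _ := ENNReal.toReal_add (E.cs_vol_ne_top i j s) (by rw [Real.volume_Ioc]; exact ENNReal.ofReal_ne_top)
      _ = (volume (E.cs i j s)).toReal + (t - s) := by
          rw [Real.volume_Ioc, ENNReal.toReal_ofReal (by linarith)]
  have hsum : ∑ i, (volume (E.cs i j t)).toReal
      ≤ ∑ i : Fin n, ((volume (E.cs i j s)).toReal + (t - s)) := Finset.sum_le_sum fun i _ => h i
  rw [Finset.sum_add_distrib, Finset.sum_const, Finset.card_univ, Fintype.card_fin,
    nsmul_eq_mul] at hsum
  linarith


private lemma aux_nonpos {n : ℕ} {r : ℝ} (h : ∀ ε : ℝ, 0 < ε → r ≤ n * ε) : r ≤ 0 := by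
  by_contra hc
  push_neg at hc
  have h4 : (0:ℝ) < (n:ℝ) + 1 := by positivity
  have h1 := h (r / ((n:ℝ) + 1)) (by positivity)
  have e1 : (n:ℝ) * r < r * ((n:ℝ) + 1) := by nlinarith
  have e2 : (n:ℝ) * (r / ((n:ℝ) + 1)) < r := by
    rw [mul_div_assoc'];
    exact (div_lt_iff₀ h4).mpr e1
  linarith

lemma rem_nonneg (E : PSExec n m rk active) (j : Fin m) {t : ℝ} (ht : 0 ≤ t) :
    0 ≤ E.rem j t := by
  by_contra h
  push_neg at h
  set Sv := {s : ℝ | s ∈ Set.Icc 0 t ∧ E.rem j s ≤ 0} with hSv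
  have htS : t ∈ Sv := ⟨⟨ht, le_refl t⟩, h.le⟩
  have hbdd : BddBelow Sv := ⟨0, fun s hs => hs.1.1⟩
  have hne : Sv.Nonempty := ⟨t, htS⟩
  set τ := sInf Sv with hτdef
  have hτ0 : 0 ≤ τ := le_csInf hne (fun s hs => hs.1.1)
  have hτt : τ ≤ t := csInf_le hbdd htS
  -- after τ the remaining supply is nonpositive
  have hafter : ∀ u : ℝ, τ < u → E.rem j u ≤ 0 := by
    intro u hu
    obtain ⟨v, hvS, hv⟩ := (csInf_lt_iff hbdd hne).mp hu
    have hv0 : 0 ≤ v := hvS.1.1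
    have := E.rem_anti j hv0 hv.le
    linarith [hvS.2]
  -- before τ the remaining supply is positive
  have hbefore : ∀ s : ℝ, 0 ≤ s → s < τ → 0 < E.rem j s := by
    intro s h0 hlt
    by_contra hc; push_neg at hc
    exact absurd (csInf_le hbdd ⟨⟨h0, hlt.le.trans hτt⟩, hc⟩) (not_le.mpr hlt)
  -- rem at τ is nonnegative
  have hremτ : 0 ≤ E.rem j τ := by
    rcases eq_or_lt_of_le hτ0 with h0 | h0
    · rw [← h0, E.rem_zero j]; norm_num
    · by_contra hc; push_neg at hc
      set δ := (-E.rem j τ) / ((n:ℝ) + 1) with hδdef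
      have hδpos : 0 < δ := div_pos (neg_pos.mpr hc) (by positivity)
      set s := max (τ - δ/2) (τ/2) with hsdef
      have hs0 : 0 ≤ s := le_trans (by linarith) (le_max_right _ _)
      have hsτ : s < τ := max_lt (by linarith) (by linarith)
      have hd : τ - s ≤ δ/2 := by
        have h1 : τ - δ/2 ≤ s := le_max_left _ _
        linarith
      have h2 := E.rem_sub_le j hs0 hsτ.le
      have h3 : (n:ℝ) * (τ - s) ≤ (n:ℝ) * (δ/2) :=
        mul_le_mul_of_nonneg_left hd (by positivity)
      have h5 : (n:ℝ) * δ < -E.rem j τ := by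
        rw [hδdef, mul_div_assoc']
        have hx : 0 < -E.rem j τ := neg_pos.mpr hc
        apply (div_lt_iff₀ (by positivity : (0:ℝ) < (n:ℝ)+1)).mpr
        nlinarith
      have h6 : E.rem j s < 0 := by nlinarith
      exact absurd (hbefore s hs0 hsτ) (by linarith)
  -- rem j t = rem j τ
  have heq : E.rem j t = E.rem j τ := by
    rw [E.rem_eq j t ht, E.rem_eq j τ hτ0]
    have hcseq : ∀ i : Fin n, E.cs i j t = E.cs i j τ := by
      intro i
      apply Set.Subset.antisymm _ (E.cs_mono i j hτt)
      rintro u ⟨h1, h2, h3⟩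
      refine ⟨h1, ?_, h3⟩
      by_contra hu
      push_neg at hu
      have hur : E.rem j u ≤ 0 := hafter u hu
      by_cases hact : active i u
      · have := (E.eats_iff i u h1.le hact j).mp h3
        linarith [this.1]
      · rw [E.eats_none i u hact] at h3
        cases h3
    simp only [hcseq]
  linarith

lemma exhaust_of_rem_zero (E : PSExec n m rk active) (j : Fin m) {t : ℝ} (ht : 0 ≤ t)
    (hz : E.rem j t = 0) : ∃ τ : ℝ, 0 < τ ∧ τ ≤ t ∧ E.exhaustedAt j τ := by
  set Sv := {s : ℝ | s ∈ Set.Icc 0 t ∧ E.rem j s ≤ 0} with hSv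
  have htS : t ∈ Sv := ⟨⟨ht, le_refl t⟩, hz.le⟩
  have hbdd : BddBelow Sv := ⟨0, fun s hs => hs.1.1⟩
  have hne : Sv.Nonempty := ⟨t, htS⟩
  set τ := sInf Sv with hτdef
  have hτ0 : 0 ≤ τ := le_csInf hne (fun s hs => hs.1.1)
  have hτt : τ ≤ t := csInf_le hbdd htS
  have hbefore : ∀ s : ℝ, 0 ≤ s → s < τ → 0 < E.rem j s := by
    intro s h0 hlt
    by_contra hc; push_neg at hc
    exact absurd (csInf_le hbdd ⟨⟨h0, hlt.le.trans hτt⟩, hc⟩) (not_le.mpr hlt)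
  have hle : E.rem j τ ≤ 0 := by
    apply aux_nonpos (n := n)
    intro ε hε
    obtain ⟨v, hvS, hv⟩ := (csInf_lt_iff hbdd hne).mp (show sInf Sv < τ + ε by linarith)
    have h1 : τ ≤ v := csInf_le hbdd hvS
    have h2 := E.rem_sub_le j hτ0 h1
    have h3 : (n:ℝ) * (v - τ) ≤ (n:ℝ) * ε :=
      mul_le_mul_of_nonneg_left (by linarith) (by positivity)
    linarith [hvS.2]
  have hge : 0 ≤ E.rem j τ := E.rem_nonneg j hτ0
  have hzero : E.rem j τ = 0 := le_antisymm hle hge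
  have hτpos : 0 < τ := by
    rcases eq_or_lt_of_le hτ0 with h0 | h0
    · exfalso; rw [← h0, E.rem_zero j] at hzero; norm_num at hzero
    · exact h0
  exact ⟨τ, hτpos, hτt, hτpos, hzero, hbefore⟩

lemma exists_eats (E : PSExec n m rk active) (i : Fin n) (t : ℝ) (ht : 0 ≤ t)
    (hact : active i t) (j0 : Fin m) (h0 : 0 < E.rem j0 t) :
    ∃ k, E.eats i t = some k ∧ 0 < E.rem k t ∧ rk i k ≤ rk i j0 := by
  classical
  obtain ⟨k, hk, hmin⟩ := Finset.exists_min_image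
    (Finset.univ.filter fun j => 0 < E.rem j t) (rk i)
    ⟨j0, Finset.mem_filter.mpr ⟨Finset.mem_univ _, h0⟩⟩
  have hk2 : 0 < E.rem k t := (Finset.mem_filter.mp hk).2
  refine ⟨k, ?_, hk2, hmin j0 (Finset.mem_filter.mpr ⟨Finset.mem_univ _, h0⟩)⟩
  exact (E.eats_iff i t ht hact k).mpr
    ⟨hk2, fun j' hj' => hmin j' (Finset.mem_filter.mpr ⟨Finset.mem_univ _, hj'⟩)⟩

lemma cs_disj (E : PSExec n m rk active) (i : Fin n) (t : ℝ) {k k' : Fin m} (h : k ≠ k') :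
    Disjoint (E.cs i k t) (E.cs i k' t) := by
  rw [Set.disjoint_left]
  rintro s ⟨-, -, h1⟩ ⟨-, -, h2⟩
  rw [h1] at h2
  exact h (Option.some.inj h2)

lemma sum_vol_toReal (F : Finset (Fin m)) (g : Fin m → Set ℝ)
    (hm : ∀ k, MeasurableSet (g k)) (hd : ∀ k k', k ≠ k' → Disjoint (g k) (g k'))
    (hfin : ∀ k, volume (g k) ≠ ⊤) :
    ∑ k ∈ F, (volume (g k)).toReal = (volume (⋃ k ∈ F, g k)).toReal := by
  rw [measure_biUnion_finset (fun a _ b _ hab => hd a b hab) (fun b _ => hm b)]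
  rw [ENNReal.toReal_sum (fun a _ => hfin a)]


lemma compare (i1 : Fin n) (E : PSExec n m rk (fun _ _ => True))
    (E' : PSExec n m rk (fun i _ => i ≠ i1)) :
    ∀ t : ℝ, 0 ≤ t → ∀ j, 0 < E.rem j t → 0 < E'.rem j t := by
  classical
  by_contra hcon
  push_neg at hcon
  obtain ⟨t0, ht0, j0, hj0, hj0'⟩ := hcon
  set B : Fin m → Set ℝ := fun j => {t | 0 ≤ t ∧ 0 < E.rem j t ∧ E'.rem j t ≤ 0} with hB
  set Fne := Finset.univ.filter (fun j => (B j).Nonempty) with hF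
  have hFne : Fne.Nonempty := by
    refine ⟨j0, Finset.mem_filter.mpr ⟨Finset.mem_univ _, ⟨t0, ht0, hj0, hj0'⟩⟩⟩
  obtain ⟨js, hjs, hmin⟩ := Finset.exists_min_image Fne (fun j => sInf (B j)) hFne
  have hBjs : (B js).Nonempty := (Finset.mem_filter.mp hjs).2
  have hbdd : ∀ j, BddBelow (B j) := fun j => ⟨0, fun x hx => hx.1⟩
  set τ := sInf (B js) with hτdef
  have hτ0 : 0 ≤ τ := le_csInf hBjs (fun x hx => hx.1)
  have hrem : 0 < E.rem js τ := by
    obtain ⟨u, hu⟩ := hBjs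
    have h1 : τ ≤ u := csInf_le (hbdd js) hu
    exact lt_of_lt_of_le hu.2.1 (E.rem_anti js hτ0 h1)
  have hmin' : ∀ s : ℝ, 0 ≤ s → s < τ → ∀ j, 0 < E.rem j s → 0 < E'.rem j s := by
    intro s h0 hlt j hj
    by_contra hc; push_neg at hc
    have hsB : s ∈ B j := ⟨h0, hj, hc⟩
    have h1 : sInf (B j) ≤ s := csInf_le (hbdd j) hsB
    have h2 : τ ≤ sInf (B j) :=
      hmin j (Finset.mem_filter.mpr ⟨Finset.mem_univ _, ⟨s, hsB⟩⟩)
    linarith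
  have hkey : E.rem js τ ≤ E'.rem js τ := by
    rw [E.rem_eq js τ hτ0, E'.rem_eq js τ hτ0]
    have hsum : ∑ i, (volume (E'.cs i js τ)).toReal ≤ ∑ i, (volume (E.cs i js τ)).toReal := by
      apply Finset.sum_le_sum
      intro i _
      by_cases hi : i = i1
      · have hempty : E'.cs i js τ = ∅ := by
          ext s
          simp only [cs, Set.mem_setOf_eq, Set.mem_empty_iff_false, iff_false, not_and]
          intro _ _
          rw [E'.eats_none i s (by simp [hi])]
          simp
        rw [hempty]
        simp [ENNReal.toReal_nonneg]
      · have hsub : E'.cs i js τ ⊆ E.cs i js τ ∪ {τ} := by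
          rintro s ⟨hs0, hsτ, hse⟩
          rcases eq_or_lt_of_le hsτ with he | hlt
          · exact Or.inr (by simp [he])
          · left
            have h1 := (E'.eats_iff i s hs0.le hi js).mp hse
            refine ⟨hs0, hlt.le, ?_⟩
            apply (E.eats_iff i s hs0.le trivial js).mpr
            refine ⟨lt_of_lt_of_le hrem (E.rem_anti js hs0.le hlt.le), ?_⟩
            intro j' hj'
            exact h1.2 j' (hmin' s hs0.le hlt j' hj')
        calc (volume (E'.cs i js τ)).toReal
            ≤ (volume (E.cs i js τ ∪ {τ})).toReal := by
              apply ENNReal.toReal_mono _ (measure_mono hsub)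
              apply ne_of_lt
              calc volume (E.cs i js τ ∪ {τ})
                  ≤ volume (E.cs i js τ) + volume ({τ} : Set ℝ) := measure_union_le _ _
                _ < ⊤ := by
                    rw [Real.volume_singleton, add_zero]
                    exact (E.cs_vol_ne_top i js τ).lt_top
          _ = (volume (E.cs i js τ)).toReal := by
              congr 1
              apply le_antisymm
              · calc volume (E.cs i js τ ∪ {τ})
                    ≤ volume (E.cs i js τ) + volume ({τ} : Set ℝ) := measure_union_le _ _
                  _ = volume (E.cs i js τ) := by rw [Real.volume_singleton, add_zero]
              · exact measure_mono Set.subset_union_left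
    linarith
  have hτle : E'.rem js τ ≤ 0 := by
    apply aux_nonpos (n := n)
    intro ε hε
    obtain ⟨v, hvB, hv⟩ := (csInf_lt_iff (hbdd js) hBjs).mp
      (show sInf (B js) < τ + ε by linarith)
    have h1 : τ ≤ v := csInf_le (hbdd js) hvB
    have h2 := E'.rem_sub_le js hτ0 h1
    have h3 : (n:ℝ) * (v - τ) ≤ (n:ℝ) * ε :=
      mul_le_mul_of_nonneg_left (by linarith) (by positivity)
    linarith [hvB.2.2]
  linarith


end PSExec

/-- let `t₁ < 1/3` be a time such that every item of which agent 1 eats a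
positive amount and which is exhausted on or before `t₁` has, at its exhaustion moment, at
least two agents other than agent 1 eating it.  Then, with agent 1 removed entirely, every
item exhausted on or before `t₁` in the original process is exhausted by time `(3/2)·t₁`. -/
theorem removed_agent_exhaust_O1
    (n m : ℕ) (rk : Fin n → Fin m → ℕ) (hrk : ∀ i, Function.Injective (rk i))
    (i1 : Fin n)
    (E : PSExec n m rk (fun _ _ => True))
    (E' : PSExec n m rk (fun i _ => i ≠ i1))
    (t1 : ℝ) (ht1 : 0 ≤ t1) (ht1' : t1 < 1 / 3)
    (h2eaters : ∀ j : Fin m, 0 < E.alloc i1 j → ∀ τ : ℝ, τ ≤ t1 → E.exhaustedAt j τ →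
      2 ≤ Set.ncard {i : Fin n | i ≠ i1 ∧ E.eatsAt i j τ}) :
    ∀ j : Fin m, ∀ τ : ℝ, τ ≤ t1 → E.exhaustedAt j τ →
      ∃ τ' : ℝ, τ' ≤ (3 / 2) * t1 ∧ E'.exhaustedAt j τ' := by
  classical
  intro j τ hτle hexh
  obtain ⟨hτpos, hτzero, hτbef⟩ := hexh
  have ht1pos : 0 < t1 := lt_of_lt_of_le hτpos hτle
  set T : ℝ := 3 / 2 * t1 with hTdef
  have ht1T : t1 ≤ T := by rw [hTdef]; linarith
  have hT0 : 0 ≤ T := le_trans ht1 ht1T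
  have hjt1 : E.rem j t1 = 0 := by
    have h1 : E.rem j t1 ≤ E.rem j τ := E.rem_anti j hτpos.le hτle
    have h2 : 0 ≤ E.rem j t1 := E.rem_nonneg j ht1
    linarith [hτzero ▸ h1]
  -- MAIN CLAIM: rem' j T = 0
  have hzero : E'.rem j T = 0 := by
    rcases eq_or_lt_of_le (E'.rem_nonneg j hT0) with h | hpos
    · exact h.symm
    exfalso
    set O1 : Finset (Fin m) := Finset.univ.filter (fun k => E.rem k t1 = 0) with hO1
    have hjO1 : j ∈ O1 := Finset.mem_filter.mpr ⟨Finset.mem_univ _, hjt1⟩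
    -- total consumption of j in E by time τ equals 1
    have hsum1 : ∑ i, (volume (E.cs i j τ)).toReal = 1 := by
      have h1 := E.rem_eq j τ hτpos.le
      rw [hτzero] at h1
      linarith
    have hwle : ∀ i, (volume (E.cs i j τ)).toReal ≤ t1 := by
      intro i
      calc (volume (E.cs i j τ)).toReal
          ≤ (ENNReal.ofReal τ).toReal :=
            ENNReal.toReal_mono ENNReal.ofReal_ne_top (E.cs_vol_le i j τ)
        _ = τ := ENNReal.toReal_ofReal hτpos.le
        _ ≤ t1 := hτle
    have hwnn : ∀ i, 0 ≤ (volume (E.cs i j τ)).toReal := fun i => ENNReal.toReal_nonneg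
    -- at least two agents other than i1 eat j in E before τ
    set P := Finset.univ.filter
      (fun i => i ≠ i1 ∧ 0 < (volume (E.cs i j τ)).toReal) with hP
    have hPcard : 2 ≤ P.card := by
      by_contra hc
      push_neg at hc
      have hc1 : P.card ≤ 1 := Nat.lt_succ_iff.mp hc
      have hsubz : ∀ i ∈ Finset.univ, i ∉ insert i1 P →
          (volume (E.cs i j τ)).toReal = 0 := by
        intro i _ hi
        simp only [Finset.mem_insert, not_or] at hi
        by_contra hne
        have hpos' : 0 < (volume (E.cs i j τ)).toReal :=
          lt_of_le_of_ne (hwnn i) (Ne.symm hne)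
        exact hi.2 (Finset.mem_filter.mpr ⟨Finset.mem_univ _, hi.1, hpos'⟩)
      have h1 : ∑ i ∈ insert i1 P, (volume (E.cs i j τ)).toReal = 1 := by
        rw [← hsum1]
        exact (Finset.sum_subset (Finset.subset_univ _) hsubz).symm ▸ rfl
      have h2 : ∑ i ∈ insert i1 P, (volume (E.cs i j τ)).toReal
          ≤ ((insert i1 P).card : ℝ) * t1 := by
        have := Finset.sum_le_card_nsmul (insert i1 P)
          (fun i => (volume (E.cs i j τ)).toReal) t1 (fun i _ => hwle i)
        rwa [nsmul_eq_mul] at this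
      have h3 : ((insert i1 P).card : ℝ) ≤ 2 := by
        have h4 : (insert i1 P).card ≤ P.card + 1 := Finset.card_insert_le _ _
        have h5 : (insert i1 P).card ≤ 2 := by omega
        exact_mod_cast h5
      nlinarith [mul_le_mul_of_nonneg_right h3 ht1]
    obtain ⟨ia, hia, ib, hib, hab⟩ := Finset.one_lt_card.mp (by omega : 1 < P.card)
    have hia1 : ia ≠ i1 := ((Finset.mem_filter.mp hia).2).1
    have hib1 : ib ≠ i1 := ((Finset.mem_filter.mp hib).2).1
    -- witness eating times
    have hwit : ∀ i ∈ P, ∃ s : ℝ, 0 < s ∧ s < τ ∧ E.eats i s = some j := by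
      intro i hi
      have hposi : 0 < (volume (E.cs i j τ)).toReal := ((Finset.mem_filter.mp hi).2).2
      have hvol : volume (E.cs i j τ) ≠ 0 := by
        intro h; rw [h] at hposi; simp at hposi
      have hne : (E.cs i j τ \ {τ}).Nonempty := by
        rw [Set.nonempty_iff_ne_empty]
        intro he
        have hsub : E.cs i j τ ⊆ {τ} := by
          intro s hs
          by_contra hs'
          exact Set.eq_empty_iff_forall_notMem.mp he s ⟨hs, hs'⟩
        have := measure_mono (μ := volume) hsub
        rw [Real.volume_singleton] at this
        exact hvol (le_antisymm this zero_le)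
      obtain ⟨s, hs, hsne⟩ := hne
      exact ⟨s, hs.1, lt_of_le_of_ne hs.2.1 (by simpa using hsne), hs.2.2⟩
    obtain ⟨sa, hsa0, hsaτ, hsaE⟩ := hwit ia hia
    obtain ⟨sb, hsb0, hsbτ, hsbE⟩ := hwit ib hib
    -- the step lemma
    have hstep : ∀ (i : Fin n), i ≠ i1 → ∀ s t : ℝ, 0 < s → s ≤ t1 → s ≤ t →
        ∀ j0 : Fin m, E.eats i s = some j0 → E.rem j0 t1 = 0 → 0 < E'.rem j0 t →
        ∃ k, k ∈ O1 ∧ E'.eats i t = some k := by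
      intro i hi s t hs0 hst1 hst j0 hw hj0 h'
      obtain ⟨k, hk1, hk2, hk3⟩ := E'.exists_eats i t (le_trans hs0.le hst) hi j0 h'
      refine ⟨k, ?_, hk1⟩
      refine Finset.mem_filter.mpr ⟨Finset.mem_univ _, ?_⟩
      by_cases hks : 0 < E.rem k s
      · have hEs := (E.eats_iff i s hs0.le trivial j0).mp hw
        have h1 : rk i j0 ≤ rk i k := hEs.2 k hks
        have hkj : k = j0 := hrk i (le_antisymm hk3 h1)
        rw [hkj]; exact hj0
      · push_neg at hks
        have h1 : E.rem k t1 ≤ E.rem k s := E.rem_anti k hs0.le hst1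
        have h2 : 0 ≤ E.rem k t1 := E.rem_nonneg k (le_trans hs0.le hst1)
        linarith
    -- sets
    set U' : Fin n → Set ℝ := fun i => ⋃ k ∈ O1, E'.cs i k T with hU'
    set A : Fin n → Set ℝ := fun i => ⋃ k ∈ O1, (E.cs i k t1 ∩ Set.Ioo 0 t1) with hA
    have hU'sub : ∀ i, U' i ⊆ Set.Ioc 0 T := by
      intro i
      exact Set.iUnion₂_subset fun k _ => E'.cs_subset_Ioc i k T
    have hU'fin : ∀ i, volume (U' i) ≠ ⊤ := by
      intro i
      apply ne_of_lt
      calc volume (U' i) ≤ volume (Set.Ioc (0:ℝ) T) := measure_mono (hU'sub i)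
        _ < ⊤ := by rw [Real.volume_Ioc]; exact ENNReal.ofReal_lt_top
    -- A i ⊆ U' i for agents other than i1
    have hAU : ∀ i, i ≠ i1 → A i ⊆ U' i := by
      intro i hi s hs
      simp only [hA, Set.mem_iUnion] at hs
      obtain ⟨k, hkO, ⟨hs0, hst1', he⟩, hio⟩ := hs
      have hkz : E.rem k t1 = 0 := (Finset.mem_filter.mp hkO).2
      have hremks : 0 < E.rem k s := ((E.eats_iff i s hs0.le trivial k).mp he).1
      have hrem's : 0 < E'.rem k s := PSExec.compare i1 E E' s hs0.le k hremks
      obtain ⟨k', hk'O, hk'e⟩ := hstep i hi s s hs0 hio.2.le le_rfl k he hkz hrem's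
      simp only [hU', Set.mem_iUnion]
      exact ⟨k', hk'O, hs0, le_trans hio.2.le ht1T, hk'e⟩
    -- Ioo t1 T ⊆ U' i for the two witnesses
    have hIoo : ∀ (i : Fin n), i ≠ i1 → ∀ s : ℝ, 0 < s → s < τ → E.eats i s = some j →
        Set.Ioo t1 T ⊆ U' i := by
      intro i hi s hs0 hsτ hse t ht
      have h' : 0 < E'.rem j t :=
        lt_of_lt_of_le hpos (E'.rem_anti j (le_trans ht1 ht.1.le) ht.2.le)
      obtain ⟨k, hkO, hke⟩ := hstep i hi s t hs0 (le_trans hsτ.le hτle)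
        (by linarith [ht.1, le_trans hsτ.le hτle]) j hse hjt1 h'
      simp only [hU', Set.mem_iUnion]
      exact ⟨k, hkO, lt_trans ht1pos ht.1, ht.2.le, hke⟩
    -- quantities
    set f' : Fin n → ℝ := fun i => ∑ k ∈ O1, (volume (E'.cs i k T)).toReal with hf'
    set f : Fin n → ℝ := fun i => ∑ k ∈ O1, (volume (E.cs i k t1)).toReal with hf
    have hf'eq : ∀ i, f' i = (volume (U' i)).toReal := by
      intro i
      rw [hf']
      exact PSExec.sum_vol_toReal O1 (fun k => E'.cs i k T) (fun k => E'.cs_meas i k T)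
        (fun k k' h => E'.cs_disj i T h) (fun k => E'.cs_vol_ne_top i k T)
    -- volume of cs equals volume of cs ∩ Ioo
    have hfiA : ∀ i, f i = (volume (A i)).toReal := by
      intro i
      have hker : ∀ k : Fin m, volume (E.cs i k t1) = volume (E.cs i k t1 ∩ Set.Ioo 0 t1) := by
        intro k
        apply le_antisymm
        · calc volume (E.cs i k t1)
              ≤ volume ((E.cs i k t1 ∩ Set.Ioo 0 t1) ∪ {t1}) := by
                apply measure_mono
                rintro s ⟨h1, h2, h3⟩
                rcases eq_or_lt_of_le h2 with he | hlt
                · exact Or.inr (by simp [he])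
                · exact Or.inl ⟨⟨h1, h2, h3⟩, h1, hlt⟩
            _ ≤ volume (E.cs i k t1 ∩ Set.Ioo 0 t1) + volume ({t1} : Set ℝ) :=
                measure_union_le _ _
            _ = volume (E.cs i k t1 ∩ Set.Ioo 0 t1) := by
                rw [Real.volume_singleton, add_zero]
        · exact measure_mono Set.inter_subset_left
      rw [hf]
      have : ∀ k ∈ O1, (volume (E.cs i k t1)).toReal
          = (volume (E.cs i k t1 ∩ Set.Ioo 0 t1)).toReal := fun k _ => by rw [hker k]
      simp only []
      rw [Finset.sum_congr rfl this]
      exact PSExec.sum_vol_toReal O1 (fun k => E.cs i k t1 ∩ Set.Ioo 0 t1)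
        (fun k => (E.cs_meas i k t1).inter measurableSet_Ioo)
        (fun k k' h => ((E.cs_disj i t1 h).mono Set.inter_subset_left Set.inter_subset_left))
        (fun k => ne_of_lt (lt_of_le_of_lt (measure_mono Set.inter_subset_left)
          (E.cs_vol_ne_top i k t1).lt_top))
    -- the two sum identities
    have eq1 : ∑ k ∈ O1, E'.rem k T = (O1.card : ℝ) - ∑ i, f' i := by
      have h1 : ∀ k ∈ O1, E'.rem k T = 1 - ∑ i, (volume (E'.cs i k T)).toReal :=
        fun k _ => E'.rem_eq k T hT0
      rw [Finset.sum_congr rfl h1, Finset.sum_sub_distrib, Finset.sum_const, nsmul_eq_mul,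
        mul_one, Finset.sum_comm]
    have eq2 : (O1.card : ℝ) = ∑ i, f i := by
      have h1 : ∀ k ∈ O1, E.rem k t1 = 1 - ∑ i, (volume (E.cs i k t1)).toReal :=
        fun k _ => E.rem_eq k t1 ht1
      have h2 : ∑ k ∈ O1, E.rem k t1 = 0 :=
        Finset.sum_eq_zero fun k hk => (Finset.mem_filter.mp hk).2
      rw [Finset.sum_congr rfl h1, Finset.sum_sub_distrib, Finset.sum_const, nsmul_eq_mul,
        mul_one, Finset.sum_comm] at h2
      linarith
    -- f' i1 = 0
    have hf'i1 : f' i1 = 0 := by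
      rw [hf']
      apply Finset.sum_eq_zero
      intro k _
      have hempty : E'.cs i1 k T = ∅ := by
        ext s
        simp only [PSExec.cs, Set.mem_setOf_eq, Set.mem_empty_iff_false, iff_false, not_and]
        intro _ _
        rw [E'.eats_none i1 s (by simp)]
        simp
      rw [hempty]
      simp
    -- f i1 ≤ t1
    have hfi1 : f i1 ≤ t1 := by
      simp only [hf]
      rw [PSExec.sum_vol_toReal O1 (fun k => E.cs i1 k t1) (fun k => E.cs_meas i1 k t1)
        (fun k k' h => E.cs_disj i1 t1 h) (fun k => E.cs_vol_ne_top i1 k t1)]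
      calc (volume (⋃ k ∈ O1, E.cs i1 k t1)).toReal
          ≤ (volume (Set.Ioc (0:ℝ) t1)).toReal := by
            apply ENNReal.toReal_mono
            · rw [Real.volume_Ioc]; exact ENNReal.ofReal_ne_top
            · exact measure_mono (Set.iUnion₂_subset fun k _ => E.cs_subset_Ioc i1 k t1)
        _ = t1 := by rw [Real.volume_Ioc, sub_zero, ENNReal.toReal_ofReal ht1]
    -- per-agent bounds
    have hbound : ∀ i, i ≠ i1 → f i ≤ f' i := by
      intro i hi
      rw [hfiA i, hf'eq i]
      exact ENNReal.toReal_mono (hU'fin i) (measure_mono (hAU i hi))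
    have hboundsp : ∀ (i : Fin n), i ≠ i1 → ∀ s : ℝ, 0 < s → s < τ →
        E.eats i s = some j → f i + (T - t1) ≤ f' i := by
      intro i hi s hs0 hsτ hse
      rw [hfiA i, hf'eq i]
      have hdisj : Disjoint (A i) (Set.Ioo t1 T) := by
        rw [Set.disjoint_left]
        intro x hx hx'
        simp only [hA, Set.mem_iUnion] at hx
        obtain ⟨k, -, -, hio⟩ := hx
        exact absurd hx'.1 (not_lt.mpr hio.2.le)
      have hsub2 : A i ∪ Set.Ioo t1 T ⊆ U' i :=
        Set.union_subset (hAU i hi) (hIoo i hi s hs0 hsτ hse)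
      have hAmeas : MeasurableSet (A i) := by
        apply MeasurableSet.biUnion O1.countable_toSet
        intro k _
        exact (E.cs_meas i k t1).inter measurableSet_Ioo
      have hAfin : volume (A i) ≠ ⊤ := by
        apply ne_of_lt
        calc volume (A i) ≤ volume (Set.Ioo (0:ℝ) t1) := by
              apply measure_mono
              exact Set.iUnion₂_subset fun k _ => Set.inter_subset_right
          _ < ⊤ := by rw [Real.volume_Ioo]; exact ENNReal.ofReal_lt_top
      have hmu : volume (A i) + volume (Set.Ioo t1 T) ≤ volume (U' i) := by
        rw [← measure_union hdisj measurableSet_Ioo]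
        exact measure_mono hsub2
      have := ENNReal.toReal_mono (hU'fin i) hmu
      rw [ENNReal.toReal_add hAfin (by rw [Real.volume_Ioo]; exact ENNReal.ofReal_ne_top),
        Real.volume_Ioo, ENNReal.toReal_ofReal (by linarith)] at this
      linarith
    -- assemble
    set d : Fin n → ℝ := fun i => f' i - f i with hd
    have hdnn : ∀ i ∈ Finset.univ.erase i1, 0 ≤ d i := by
      intro i hi
      have := hbound i (Finset.ne_of_mem_erase hi)
      simp only [hd]; linarith
    have hdia : T - t1 ≤ d ia := by
      have := hboundsp ia hia1 sa hsa0 hsaτ hsaE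
      simp only [hd]; linarith
    have hdib : T - t1 ≤ d ib := by
      have := hboundsp ib hib1 sb hsb0 hsbτ hsbE
      simp only [hd]; linarith
    have hsum_d : d ia + d ib ≤ ∑ i ∈ Finset.univ.erase i1, d i := by
      have h1 : ({ia, ib} : Finset (Fin n)) ⊆ Finset.univ.erase i1 := by
        intro x hx
        simp only [Finset.mem_insert, Finset.mem_singleton] at hx
        rcases hx with h | h
        · subst h; exact Finset.mem_erase.mpr ⟨hia1, Finset.mem_univ _⟩
        · subst h; exact Finset.mem_erase.mpr ⟨hib1, Finset.mem_univ _⟩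
      have h2 := Finset.sum_le_sum_of_subset_of_nonneg h1
        (fun i hi _ => hdnn i hi)
      rwa [Finset.sum_pair hab] at h2
    have herase' : ∑ i ∈ Finset.univ.erase i1, f' i = ∑ i, f' i := by
      rw [Finset.sum_erase_eq_sub (Finset.mem_univ i1), hf'i1, sub_zero]
    have herase : ∑ i ∈ Finset.univ.erase i1, f i = (∑ i, f i) - f i1 := by
      rw [Finset.sum_erase_eq_sub (Finset.mem_univ i1)]
    have hdec : ∑ i ∈ Finset.univ.erase i1, d i
        = (∑ i ∈ Finset.univ.erase i1, f' i) - ∑ i ∈ Finset.univ.erase i1, f i := by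
      simp only [hd]
      rw [Finset.sum_sub_distrib]
    -- final chain
    have hfinal : ∑ k ∈ O1, E'.rem k T ≤ 0 := by
      rw [eq1]
      have h1 : (O1.card : ℝ) - t1 + 2 * (T - t1) ≤ ∑ i, f' i := by
        have h2 : ∑ i ∈ Finset.univ.erase i1, f i ≥ (O1.card : ℝ) - t1 := by
          rw [herase, ← eq2]; linarith
        have h3 : 2 * (T - t1) ≤ ∑ i ∈ Finset.univ.erase i1, d i := by
          linarith [hsum_d, hdia, hdib]
        have h4 : ∑ i ∈ Finset.univ.erase i1, f' i
            ≥ (O1.card : ℝ) - t1 + 2 * (T - t1) := by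
          have := hdec
          linarith
        linarith [herase' ▸ h4]
      have h5 : 2 * (T - t1) = t1 := by rw [hTdef]; ring
      linarith
    have hge : E'.rem j T ≤ ∑ k ∈ O1, E'.rem k T :=
      Finset.single_le_sum (fun k _ => E'.rem_nonneg k hT0) hjO1
    linarith
  obtain ⟨τ', hτ'0, hτ'T, hexh'⟩ := E'.exhaust_of_rem_zero j hT0 hzero
  exact ⟨τ', hTdef ▸ hτ'T, hexh'⟩
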